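/- Let σ₀ > 0, γ₁ ∈ (0,1), γ₂ > 1 and σ_max > 0, and let (σ_j)_{j≥0} be a sequence of positive real numbers with σ₀ as its first term. Let k ≥ 1 and suppose the index set {0,…,k−1} is partitioned into disjoint sets S and U such that σ_{j+1} ≥ γ₁σ_j for every j ∈ S and σ_{j+1} ≥ γ₂σ_j for every j ∈ U, and suppose σ_k ≤ σ_max. Then |U| ≤ |S|·log(1/γ₁)/log(γ₂) + log(σ_max/σ₀)/log(γ₂). -/

import Mathlib

/-- Bound on the number of unsuccessful iterations: if on successful iterations `j ∈ S`
the regularization parameter satisfies `σ_{j+1} ≥ γ₁σ_j` and on unsuccessful iterations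
`j ∈ U` it satisfies `σ_{j+1} ≥ γ₂σ_j`, with `S ∪ U = {0,…,k-1}` disjoint and
`σ_k ≤ σ_max`, then `|U| ≤ |S|·log(1/γ₁)/log γ₂ + log(σ_max/σ₀)/log γ₂`. -/
theorem unsuccessful_iterations_bound
    (σ : ℕ → ℝ) (σ₀ : ℝ) (hσ₀ : σ 0 = σ₀) (hσ₀pos : 0 < σ₀)
    (γ₁ γ₂ σ_max : ℝ) (hγ₁ : γ₁ ∈ Set.Ioo (0 : ℝ) 1) (hγ₂ : 1 < γ₂) (hσmax : 0 < σ_max)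
    (hpos : ∀ j, 0 < σ j)
    (k : ℕ) (hk : 1 ≤ k)
    (S U : Finset ℕ)
    (hdisj : Disjoint S U) (hunion : S ∪ U = Finset.range k)
    (hS : ∀ j ∈ S, γ₁ * σ j ≤ σ (j + 1))
    (hU : ∀ j ∈ U, γ₂ * σ j ≤ σ (j + 1))
    (hbound : σ k ≤ σ_max) :
    (U.card : ℝ) ≤ (S.card : ℝ) * Real.log (1 / γ₁) / Real.log γ₂ +
      Real.log (σ_max / σ₀) / Real.log γ₂ := by
  obtain ⟨hγ₁0, hγ₁1⟩ := hγ₁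
  set c : ℕ → ℝ := fun j => if j ∈ S then γ₁ else γ₂ with hc
  have hcpos : ∀ j, 0 < c j := by
    intro j; dsimp [c]; split <;> linarith
  -- key telescoping estimate
  have key : ∀ n, n ≤ k → σ 0 * ∏ j ∈ Finset.range n, c j ≤ σ n := by
    intro n hn
    induction n with
    | zero => simp
    | succ m ih =>
      have hm : m ≤ k := Nat.le_of_succ_le hn
      have ihm := ih hm
      have hmem : m ∈ S ∪ U := by
        rw [hunion]; exact Finset.mem_range.mpr hn
      have hstep : c m * σ m ≤ σ (m + 1) := by
        rcases Finset.mem_union.mp hmem with h | h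
        · simpa [c, h] using hS m h
        · have hnS : m ∉ S := Finset.disjoint_right.mp hdisj h
          simpa [c, hnS] using hU m h
      rw [Finset.prod_range_succ]
      calc σ 0 * ((∏ j ∈ Finset.range m, c j) * c m)
          = c m * (σ 0 * ∏ j ∈ Finset.range m, c j) := by ring
        _ ≤ c m * σ m := mul_le_mul_of_nonneg_left ihm (le_of_lt (hcpos m))
        _ ≤ σ (m + 1) := hstep
  have hprod : ∏ j ∈ Finset.range k, c j = γ₁ ^ S.card * γ₂ ^ U.card := by
    rw [← hunion, Finset.prod_union hdisj]
    congr 1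
    · calc ∏ j ∈ S, c j = ∏ _j ∈ S, γ₁ :=
            Finset.prod_congr rfl fun j hj => by simp [c, hj]
        _ = γ₁ ^ S.card := Finset.prod_const _
    · calc ∏ j ∈ U, c j = ∏ _j ∈ U, γ₂ := by
            refine Finset.prod_congr rfl fun j hj => ?_
            have hnS : j ∉ S := Finset.disjoint_right.mp hdisj hj
            simp [c, hnS]
        _ = γ₂ ^ U.card := Finset.prod_const _
  have hineq : σ₀ * (γ₁ ^ S.card * γ₂ ^ U.card) ≤ σ_max := by
    have := key k le_rfl
    rw [hprod, hσ₀] at this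
    linarith
  -- take logs
  have hlγ₂ : 0 < Real.log γ₂ := Real.log_pos hγ₂
  have hγ₁p : (0:ℝ) < γ₁ ^ S.card := pow_pos hγ₁0 _
  have hγ₂p : (0:ℝ) < γ₂ ^ U.card := pow_pos (by linarith) _
  have hlog : Real.log σ₀ + S.card * Real.log γ₁ + U.card * Real.log γ₂ ≤ Real.log σ_max := by
    have h := Real.log_le_log (by positivity) hineq
    rw [Real.log_mul (ne_of_gt hσ₀pos) (ne_of_gt (by positivity)),
        Real.log_mul (ne_of_gt hγ₁p) (ne_of_gt hγ₂p),
        Real.log_pow, Real.log_pow] at h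
    push_cast at h ⊢
    linarith
  have h1 : Real.log (1 / γ₁) = -Real.log γ₁ := by
    rw [Real.log_div one_ne_zero (ne_of_gt hγ₁0), Real.log_one]; ring
  have h2 : Real.log (σ_max / σ₀) = Real.log σ_max - Real.log σ₀ :=
    Real.log_div (ne_of_gt hσmax) (ne_of_gt hσ₀pos)
  rw [h1, h2, ← add_div, le_div_iff₀ hlγ₂]
  linarith
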